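/- Let Λ be a ℤ-lattice with a finite-order automorphism M_h, and let Λ⁽¹⁾ ⊂ Λ be an M_h-invariant sublattice with index [Λ : Λ⁽¹⁾] = 2. Write the characteristic polynomial of M_h as p_Λ = p₁ · p₂ where p₁ is the product of those cyclotomic factors Φ_m with m not a power of 2 and p₂ is the product of those with m a power of 2. Then p₂ ≠ 1, and for every divisor p of p₁ one has Λ_{p,ℤ} = Λ⁽¹⁾_{p,ℤ} (where Λ_{p,ℤ} := (⊕_{λ: p(λ)=0} ker(M_h - λ)) ∩ Λ), while for every p with p₂ | p one has [Λ_{p,ℤ} : Λ⁽¹⁾_{p,ℤ}] = 2. -/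

import Mathlib

open Polynomial

lemma odd_eval_one_cyclotomic {m : ℕ} (hm : 1 ≤ m) (h2 : ¬ ∃ k : ℕ, m = 2 ^ k) :
    Odd (Polynomial.eval 1 (Polynomial.cyclotomic m ℤ)) := by
  by_cases hpp : IsPrimePow m
  · obtain ⟨q, k, hq, hqm⟩ := (isPrimePow_iff_pow_succ m).1 hpp
    have hqp : Nat.Prime q := Nat.prime_iff.2 hq
    haveI : Fact (Nat.Prime q) := ⟨hqp⟩
    have hq2 : q ≠ 2 := fun h => h2 ⟨k + 1, by rw [← hqm, h]⟩
    have hqodd : Odd q := hqp.odd_of_ne_two hq2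
    subst hqm
    rw [Polynomial.eval_one_cyclotomic_prime_pow]
    exact_mod_cast hqodd
  · rw [Polynomial.eval_one_cyclotomic_not_prime_pow (fun {p} hp k hk => ?_)]
    · exact odd_one
    · rcases Nat.eq_zero_or_pos k with rfl | hk0
      · exact h2 ⟨0, by simpa using hk.symm⟩
      · exact hpp ⟨p, k, Nat.prime_iff.1 hp, hk0, hk⟩

lemma odd_eval_one_prod_cyclotomic (J : Multiset ℕ)
    (hJ : ∀ m ∈ J, 1 ≤ m ∧ ¬ ∃ k : ℕ, m = 2 ^ k) :
    Odd (Polynomial.eval 1 (J.map fun m => Polynomial.cyclotomic m ℤ).prod) := by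
  induction J using Multiset.induction_on with
  | empty => simp
  | cons a s ih =>
      rw [Multiset.map_cons, Multiset.prod_cons, Polynomial.eval_mul]
      exact (odd_eval_one_cyclotomic (hJ a (Multiset.mem_cons_self a s)).1
        (hJ a (Multiset.mem_cons_self a s)).2).mul
        (ih fun m hm => hJ m (Multiset.mem_cons_of_mem hm))

/-- For an index-2 monodromy-invariant sublattice `N ⊂ Λ`, splitting the characteristic
polynomial as `p₁ · p₂` (non-2-power cyclotomic factors times 2-power cyclotomic factors),
one has `p₂ ≠ 1`, `Λ_p = N_p` for `p ∣ p₁`, and `[Λ_p : N_p] = 2` whenever `p₂ ∣ p`. -/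
theorem stmt_4 (Λ : Type*) [AddCommGroup Λ] [Module ℤ Λ]
    [Module.Free ℤ Λ] [Module.Finite ℤ Λ]
    (M : Λ ≃ₗ[ℤ] Λ) (n : ℕ) (hn : 0 < n) (hMn : M ^ n = 1)
    (N : Submodule ℤ Λ) (hNM : ∀ a ∈ N, M a ∈ N)
    (hNindex : N.toAddSubgroup.index = 2)
    (J₁ J₂ : Multiset ℕ)
    (hJ₁ : ∀ m ∈ J₁, 1 ≤ m ∧ ¬ ∃ k : ℕ, m = 2 ^ k)
    (hJ₂ : ∀ m ∈ J₂, ∃ k : ℕ, m = 2 ^ k)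
    (p₁ p₂ : Polynomial ℤ)
    (hp₁ : p₁ = (J₁.map fun m => Polynomial.cyclotomic m ℤ).prod)
    (hp₂ : p₂ = (J₂.map fun m => Polynomial.cyclotomic m ℤ).prod)
    (hchar : LinearMap.charpoly (M.toLinearMap : Module.End ℤ Λ) = p₁ * p₂) :
    p₂ ≠ 1 ∧
    (∀ p : Polynomial ℤ, p ∣ p₁ →
      LinearMap.ker (Polynomial.aeval (M.toLinearMap : Module.End ℤ Λ) p) ≤ N) ∧
    (∀ p : Polynomial ℤ, p₂ ∣ p →
      AddSubgroup.relIndex N.toAddSubgroup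
        (LinearMap.ker (Polynomial.aeval (M.toLinearMap : Module.End ℤ Λ) p)).toAddSubgroup
        = 2) := by
  -- membership behaves like parity
  have hmem : ∀ a b : Λ, a + b ∈ N ↔ (a ∈ N ↔ b ∈ N) := by
    intro a b
    simpa using AddSubgroup.add_mem_iff_of_index_two (H := N.toAddSubgroup) hNindex (a := a) (b := b)
  have hself : ∀ x : Λ, x + x ∈ N := fun x => (hmem x x).2 Iff.rfl
  have hodd_smul : ∀ c : ℤ, Odd c → ∀ x : Λ, c • x ∈ N → x ∈ N := by
    intro c hc x hcx
    obtain ⟨k, rfl⟩ := hc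
    have h2k : (2 * k) • x ∈ N := by
      have e : (2 * k) • x = k • (x + x) := by
        rw [zsmul_add, two_mul, add_zsmul]
      rw [e]
      exact AddSubgroup.zsmul_mem N.toAddSubgroup (hself x) k
    have h3 : ((2 * k + 1) - 2 * k) • x ∈ N := by
      rw [sub_zsmul]; simpa [sub_eq_add_neg] using N.sub_mem hcx h2k
    simpa using h3
  -- powers of M preserve N ; M.symm preserves N
  have hpowN : ∀ k : ℕ, ∀ a ∈ N, (M ^ k) a ∈ N := by
    intro k
    induction k with
    | zero => simp
    | succ k ih =>
        intro a ha
        rw [pow_succ]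
        exact ih _ (hNM a ha)
  have hsymmN : ∀ a ∈ N, M.symm a ∈ N := by
    intro a ha
    have h1 : M ((M ^ (n - 1)) a) = a := by
      have : (M ^ 1 * M ^ (n - 1)) a = a := by
        rw [← pow_add]
        have : 1 + (n - 1) = n := by omega
        rw [this, hMn]; rfl
      simpa using this
    have : M.symm a = (M ^ (n - 1)) a := by
      rw [LinearEquiv.symm_apply_eq, h1]
    rw [this]
    exact hpowN _ a ha
  have hMiff : ∀ x : Λ, M x ∈ N ↔ x ∈ N := by
    intro x
    refine ⟨fun h => ?_, hNM x⟩
    simpa using hsymmN _ h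
  have hM1 : ∀ x : Λ, M x - x ∈ N := by
    intro x
    rw [sub_eq_add_neg, hmem, hMiff, neg_mem_iff]
  have hMk : ∀ (k : ℕ) (x : Λ), (M ^ k) x - x ∈ N := by
    intro k
    induction k with
    | zero => simp
    | succ k ih =>
        intro x
        have h1 : M ((M ^ k) x) - (M ^ k) x ∈ N := hM1 _
        have := N.add_mem h1 (ih x)
        have heq : (M ^ (k + 1)) x = M ((M ^ k) x) := by
          rw [pow_succ']; rfl
        rw [heq]
        simpa using this
  have hpow_eq : ∀ (k : ℕ) (x : Λ), (M.toLinearMap ^ k) x = (M ^ k) x := by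
    intro k
    induction k with
    | zero => intro x; rfl
    | succ k ih =>
        intro x
        rw [pow_succ, pow_succ, Module.End.mul_apply, ih]
        rfl
  -- key congruence: aeval q x ≡ q(1) • x mod N
  have hB : ∀ (q : Polynomial ℤ) (x : Λ),
      (Polynomial.aeval (M.toLinearMap : Module.End ℤ Λ) q) x - q.eval 1 • x ∈ N := by
    intro q
    induction q using Polynomial.induction_on' with
    | add p q hp hq =>
        intro x
        have h := N.add_mem (hp x) (hq x)
        rw [map_add, LinearMap.add_apply, Polynomial.eval_add, add_zsmul]
        have e : (Polynomial.aeval (M.toLinearMap : Module.End ℤ Λ) p) x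
            + (Polynomial.aeval (M.toLinearMap : Module.End ℤ Λ) q) x
            - (p.eval 1 • x + q.eval 1 • x)
            = ((Polynomial.aeval (M.toLinearMap : Module.End ℤ Λ) p) x - p.eval 1 • x)
            + ((Polynomial.aeval (M.toLinearMap : Module.End ℤ Λ) q) x - q.eval 1 • x) := by
          abel
        rw [e]; exact h
    | monomial k c =>
        intro x
        have h1 : (Polynomial.aeval (M.toLinearMap : Module.End ℤ Λ)
            (Polynomial.monomial k c)) x = c • ((M ^ k) x) := by
          rw [Polynomial.aeval_monomial]
          simp only [Module.End.mul_apply, Module.algebraMap_end_apply, hpow_eq k x,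
            ← Int.cast_smul_eq_zsmul ℤ, Int.cast_id]
          rw [algebraMap_int_eq, eq_intCast, Module.End.intCast_apply]
          exact (int_smul_eq_zsmul _ _ _).symm
        rw [h1, Polynomial.eval_monomial, one_pow, mul_one, ← zsmul_sub]
        exact AddSubgroup.zsmul_mem N.toAddSubgroup (hMk k x) c
  have hodd₁ : Odd (p₁.eval 1) := by
    rw [hp₁]; exact odd_eval_one_prod_cyclotomic J₁ hJ₁
  have hcayley : Polynomial.aeval (M.toLinearMap : Module.End ℤ Λ) (p₁ * p₂) = 0 := by
    rw [← hchar]; convert LinearMap.aeval_self_charpoly (M.toLinearMap : Module.End ℤ Λ)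
    all_goals congr
    all_goals exact Subsingleton.elim (α := Algebra ℤ (Module.End ℤ Λ)) _ _
  -- Claim 2
  have claim2 : ∀ p : Polynomial ℤ, p ∣ p₁ →
      LinearMap.ker (Polynomial.aeval (M.toLinearMap : Module.End ℤ Λ) p) ≤ N := by
    intro p hdvd x hx
    rw [LinearMap.mem_ker] at hx
    have h1 : p.eval 1 • x ∈ N := by
      have := hB p x
      rw [hx, zero_sub, neg_mem_iff] at this
      exact this
    have hoddp : Odd (p.eval 1) := by
      rcases hdvd with ⟨q, rfl⟩
      rw [Polynomial.eval_mul] at hodd₁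
      rw [Int.not_even_iff_odd.symm.eq] at hodd₁ ⊢
      exact fun h => hodd₁ (h.mul_right _)
    exact hodd_smul _ hoddp x h1
  -- Claim 1
  have claim1 : p₂ ≠ 1 := by
    intro h
    have hall : ∀ x : Λ, x ∈ N := by
      intro x
      apply claim2 p₁ dvd_rfl
      rw [LinearMap.mem_ker]
      have : Polynomial.aeval (M.toLinearMap : Module.End ℤ Λ) p₁ = 0 := by
        rw [h, mul_one] at hcayley; exact hcayley
      rw [this]; rfl
    have : N.toAddSubgroup = ⊤ := AddSubgroup.eq_top_iff' _ |>.2 hall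
    rw [this, AddSubgroup.index_top] at hNindex
    exact absurd hNindex (by norm_num)
  refine ⟨claim1, claim2, ?_⟩
  -- Claim 3
  intro p hdvd
  obtain ⟨q, rfl⟩ := hdvd
  set K := LinearMap.ker (Polynomial.aeval (M.toLinearMap : Module.End ℤ Λ) (p₂ * q)) with hK
  have hdvd2 : AddSubgroup.relIndex N.toAddSubgroup K.toAddSubgroup ∣ 2 := by
    rw [← hNindex]
    exact AddSubgroup.relIndex_dvd_index_of_normal _ _
  have hne1 : AddSubgroup.relIndex N.toAddSubgroup K.toAddSubgroup ≠ 1 := by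
    rw [Ne, AddSubgroup.relIndex_eq_one]
    intro hle
    -- find x₀ ∉ N
    have hx₀ : ∃ x₀ : Λ, x₀ ∉ N := by
      by_contra h
      push_neg at h
      have : N.toAddSubgroup = ⊤ := AddSubgroup.eq_top_iff' _ |>.2 h
      rw [this, AddSubgroup.index_top] at hNindex
      exact absurd hNindex (by norm_num)
    obtain ⟨x₀, hx₀⟩ := hx₀
    set y := (Polynomial.aeval (M.toLinearMap : Module.End ℤ Λ) p₁) x₀ with hy
    have hyK : y ∈ K := by
      rw [hK, LinearMap.mem_ker, hy, ← Module.End.mul_apply, ← map_mul]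
      have : p₂ * q * p₁ = q * (p₁ * p₂) := by ring
      rw [this, map_mul, Module.End.mul_apply, hcayley, LinearMap.zero_apply, map_zero]
    have hyN : y ∈ N := hle hyK
    have h1 : p₁.eval 1 • x₀ ∈ N := by
      have := hB p₁ x₀
      have := N.sub_mem hyN this
      simpa [hy] using this
    exact hx₀ (hodd_smul _ hodd₁ x₀ h1)
  rcases (Nat.prime_two.eq_one_or_self_of_dvd _ hdvd2) with h | h
  · exact absurd h hne1
  · exact h
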